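/- Let Γ be an n-valent GKM_k graph with k ≥ 2. Then for any vertex v of Γ and any l edges e_1,…,e_l meeting at v with 1 ≤ l ≤ k−1, there exists a unique l-dimensional face of Γ (i.e., a connected l-valent subgraph invariant under the connection) containing e_1,…,e_l. -/

import Mathlib

/-- An abstract graph with oriented edges: `ini e` is the initial vertex of the
oriented edge `e`, and `bar e` is `e` with the opposite orientation. -/
structure PreGraph where
  V : Type
  E : Type
  ini : E → V
  bar : E → E
  bar_invol : ∀ e, bar (bar e) = e

namespace PreGraph

noncomputable section

variable (G : PreGraph)

/-- The terminal vertex of an oriented edge. -/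
def ter (e : G.E) : G.V := G.ini (G.bar e)

/-- A connection on a graph: for every oriented edge `e` a bijection from the
edges starting at `ini e` to the edges starting at `ter e` (totalised to all
edges), with `∇_e e = ē` and `∇_{ē} = ∇_e⁻¹`. -/
structure Connection where
  nabla : G.E → G.E → G.E
  ini_nabla : ∀ e f, G.ini (nabla e f) = G.ter e
  nabla_self : ∀ e, nabla e e = G.bar e
  nabla_inv : ∀ e f, G.ini f = G.ini e → nabla (G.bar e) (nabla e f) = f

variable (N : G.Connection)

/-- The graph is connected. -/
def Connected : Prop :=
  ∀ v w : G.V, Relation.ReflTransGen (fun a b => ∃ e : G.E, G.ini e = a ∧ G.ter e = b) v w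

/-- The graph is `n`-valent: exactly `n` oriented edges start at every vertex. -/
def Valent (n : ℕ) : Prop := ∀ v : G.V, {e : G.E | G.ini e = v}.ncard = n

/-- The number of vertices of a subgraph given by a set of oriented edges. -/
def Vcount (S : Set G.E) : ℕ := (G.ini '' S).ncard

/-- An `l`-dimensional face of a graph with connection: a nonempty connected
`l`-valent `∇`-invariant subgraph (given by its set of oriented edges, closed
under orientation reversal). -/
def IsFace (l : ℕ) (S : Set G.E) : Prop :=
  S.Nonempty ∧
  (∀ e ∈ S, G.bar e ∈ S) ∧
  (∀ e ∈ S, ∀ f ∈ S, G.ini f = G.ini e → N.nabla e f ∈ S) ∧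
  (∀ v ∈ G.ini '' S, {e : G.E | e ∈ S ∧ G.ini e = v}.ncard = l) ∧
  (∀ v ∈ G.ini '' S, ∀ w ∈ G.ini '' S,
    Relation.ReflTransGen (fun a b => ∃ g ∈ S, G.ini g = a ∧ G.ter g = b) v w)

/-- Two edges at a common vertex span the two-dimensional face `S`. -/
def SpanFace (e e' : G.E) (S : Set G.E) : Prop := G.IsFace N 2 S ∧ e ∈ S ∧ e' ∈ S

/-- Two edges span a triangle (a 2-face with three vertices). -/
def SpanTriangle (e e' : G.E) : Prop := ∃ S, G.SpanFace N e e' S ∧ G.Vcount S = 3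

/-- Two edges span a biangle (a 2-face with two vertices). -/
def SpanBiangle (e e' : G.E) : Prop := ∃ S, G.SpanFace N e e' S ∧ G.Vcount S = 2

/-- Two edges span a square (a 2-face with four vertices). -/
def SpanSquare (e e' : G.E) : Prop := ∃ S, G.SpanFace N e e' S ∧ G.Vcount S = 4

/-- A subgraph has the combinatorial type of a simplex `Δ^k`
iff all its 2-faces are triangles. -/
def SimplexType (S : Set G.E) : Prop := ∀ T ⊆ S, G.IsFace N 2 T → G.Vcount T = 3

/-- A subgraph has the combinatorial type of `Σ^k` iff all its 2-faces are biangles. -/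
def SigmaType (S : Set G.E) : Prop := ∀ T ⊆ S, G.IsFace N 2 T → G.Vcount T = 2

/-- The five possible combinatorial types of small three-dimensional faces:
`Σ³` (2 vertices), `Δ³` (4 vertices, all 2-faces triangles), `Σ²×I` (4 vertices,
2-faces biangles and squares), `Δ²×I` (6 vertices, 2-faces triangles and squares),
`I³` (8 vertices, all 2-faces squares). -/
def SmallType (S : Set G.E) : Prop :=
  G.Vcount S = 2 ∨
  (G.Vcount S = 4 ∧ G.SimplexType N S) ∨
  (G.Vcount S = 4 ∧ ∀ T ⊆ S, G.IsFace N 2 T → G.Vcount T = 2 ∨ G.Vcount T = 4) ∨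
  (G.Vcount S = 6 ∧ ∀ T ⊆ S, G.IsFace N 2 T → G.Vcount T = 3 ∨ G.Vcount T = 4) ∨
  (G.Vcount S = 8 ∧ ∀ T ⊆ S, G.IsFace N 2 T → G.Vcount T = 4)

/-- A graph with small three-dimensional faces: connected, any two (resp. three)
distinct edges at a vertex span a unique 2-face (resp. 3-face), and every
3-dimensional face has one of the five small combinatorial types. -/
def SmallFaces : Prop :=
  G.Connected ∧
  (∀ e e' : G.E, G.ini e = G.ini e' → e ≠ e' → ∃! S, G.SpanFace N e e' S) ∧
  (∀ e₁ e₂ e₃ : G.E, G.ini e₁ = G.ini e₂ → G.ini e₂ = G.ini e₃ →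
    e₁ ≠ e₂ → e₁ ≠ e₃ → e₂ ≠ e₃ →
    ∃! S, G.IsFace N 3 S ∧ e₁ ∈ S ∧ e₂ ∈ S ∧ e₃ ∈ S) ∧
  (∀ S, G.IsFace N 3 S → G.SmallType N S)

/-- A subgraph is "simplex-like" if it is a face of some dimension whose
combinatorial type is that of `Δ^k` or of `Σ^k`. -/
def IsSimplexLike (S : Set G.E) : Prop :=
  (∃ l, G.IsFace N l S) ∧ (G.SimplexType N S ∨ G.SigmaType N S)

/-- A maximal simplex at the vertex `x`. -/
def MaxSimplexAt (x : G.V) (S : Set G.E) : Prop :=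
  G.IsSimplexLike N S ∧ x ∈ G.ini '' S ∧
  ∀ S', S ⊆ S' → G.IsSimplexLike N S' → x ∈ G.ini '' S' → S' = S

/-- A GKM_k labelling of a graph with connection, with weights (defined up to
sign; a lift has been chosen) in an `m`-dimensional rational vector space:
any `k` weights at a common vertex are linearly independent, and the
connection satisfies the GKM compatibility relation. -/
structure GKMLabel (m k : ℕ) where
  w : G.E → (Fin m → ℚ)
  label_bar : ∀ e, w (G.bar e) = w e ∨ w (G.bar e) = - w e
  indep : ∀ (s : Finset G.E) (v : G.V), (∀ e ∈ s, G.ini e = v) → s.card ≤ k →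
    LinearIndependent ℚ (fun e : s => w e.1)
  conn_rel : ∀ e f, G.ini f = G.ini e →
    ∃ p q : ℚ, w (N.nabla e f) = p • w f + q • w e

end
end PreGraph

open PreGraph


namespace PreGraph

/-- The set of edges generated from `s` by orientation reversal and the connection. -/
inductive Gen (G : PreGraph) (N : G.Connection) (s : Set G.E) : G.E → Prop
  | base : ∀ e ∈ s, Gen G N s e
  | barc : ∀ e, Gen G N s e → Gen G N s (G.bar e)
  | step : ∀ e f, Gen G N s e → Gen G N s f → G.ini f = G.ini e → Gen G N s (N.nabla e f)

variable {G : PreGraph} {N : G.Connection} {s : Set G.E}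

lemma ter_bar (e : G.E) : G.ter (G.bar e) = G.ini e := by
  simp [PreGraph.ter, G.bar_invol]

/-- All generated weights lie in the span of the weights of `s`. -/
lemma w_mem_span {m k : ℕ} (L : G.GKMLabel N m k) {e : G.E} (he : Gen G N s e) :
    L.w e ∈ Submodule.span ℚ (L.w '' s) := by
  induction he with
  | base e he => exact Submodule.subset_span ⟨e, he, rfl⟩
  | barc e _ ih =>
      rcases L.label_bar e with h | h
      · rw [h]; exact ih
      · rw [h]; exact Submodule.neg_mem _ ih
  | step e f _ _ h ihe ihf =>
      obtain ⟨p, q, hw⟩ := L.conn_rel e f h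
      rw [hw]
      exact Submodule.add_mem _ (Submodule.smul_mem _ _ ihf) (Submodule.smul_mem _ _ ihe)

/-- At any vertex, at most `l` generated edges, where `l = s.card`. -/
lemma ncard_A_le_l [Finite G.E] {m k l : ℕ} (L : G.GKMLabel N m k)
    (t : Finset G.E) (hts : (t : Set G.E) = s) (hcard : t.card = l) (hlk : l + 1 ≤ k)
    (x : G.V) :
    {g | Gen G N s g ∧ G.ini g = x}.ncard ≤ l := by
  classical
  by_contra hcon
  push_neg at hcon
  set A : Set G.E := {g | Gen G N s g ∧ G.ini g = x} with hA
  obtain ⟨B, hBA, hB⟩ := Set.exists_subset_card_eq (hcon : l + 1 ≤ A.ncard)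
  have hBfin : B.Finite := Set.toFinite _
  set tB : Finset G.E := hBfin.toFinset with htB
  have htBcard : tB.card = l + 1 := by
    rw [htB, ← Set.ncard_eq_toFinset_card B hBfin, hB]
  have htBmem : ∀ g ∈ tB, g ∈ A := by
    intro g hg
    exact hBA (by simpa [htB] using hg)
  have hli : LinearIndependent ℚ (fun e : tB => L.w e.1) :=
    L.indep tB x (fun e he => (htBmem e he).2) (by omega)
  set Ω : Submodule ℚ (Fin m → ℚ) := Submodule.span ℚ (L.w '' s) with hΩ
  have hmem : ∀ e : tB, L.w e.1 ∈ Ω := fun e => w_mem_span L (htBmem e.1 e.2).1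
  have hli' : LinearIndependent ℚ (fun e : tB => (⟨L.w e.1, hmem e⟩ : Ω)) := by
    apply LinearIndependent.of_comp Ω.subtype
    exact hli
  have hfin : Module.finrank ℚ Ω ≤ l := by
    have h1 : L.w '' s = ↑(t.image L.w) := by
      rw [Finset.coe_image, hts]
    have h2 := finrank_span_finset_le_card (R := ℚ) (t.image L.w)
    unfold Set.finrank at h2
    rw [hΩ, h1]
    exact h2.trans (le_of_le_of_eq Finset.card_image_le hcard)
  have := hli'.fintype_card_le_finrank
  rw [Fintype.card_coe, htBcard] at this
  omega

/-- Transport along a generated edge does not decrease the number of generated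
edges at a vertex. -/
lemma ncard_A_mono [Finite G.E] {e : G.E} (he : Gen G N s e) :
    {g | Gen G N s g ∧ G.ini g = G.ini e}.ncard ≤
      {g | Gen G N s g ∧ G.ini g = G.ter e}.ncard := by
  have hinj : Set.InjOn (N.nabla e) {g | Gen G N s g ∧ G.ini g = G.ini e} := by
    intro f1 h1 f2 h2 hq
    have e1 := N.nabla_inv e f1 h1.2
    have e2 := N.nabla_inv e f2 h2.2
    rw [hq] at e1
    rw [← e1, e2]
  have himg : N.nabla e '' {g | Gen G N s g ∧ G.ini g = G.ini e} ⊆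
      {g | Gen G N s g ∧ G.ini g = G.ter e} := by
    rintro _ ⟨f, hf, rfl⟩
    exact ⟨Gen.step e f he hf.1 hf.2, N.ini_nabla e f⟩
  calc {g | Gen G N s g ∧ G.ini g = G.ini e}.ncard
      = (N.nabla e '' {g | Gen G N s g ∧ G.ini g = G.ini e}).ncard :=
        (Set.ncard_image_of_injOn hinj).symm
    _ ≤ _ := Set.ncard_le_ncard himg (Set.toFinite _)

lemma ncard_A_eq [Finite G.E] {e : G.E} (he : Gen G N s e) :
    {g | Gen G N s g ∧ G.ini g = G.ter e}.ncard =
      {g | Gen G N s g ∧ G.ini g = G.ini e}.ncard := by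
  refine le_antisymm ?_ (ncard_A_mono he)
  have h2 := ncard_A_mono (Gen.barc e he)
  have h3 : G.ini (G.bar e) = G.ter e := rfl
  rw [h3, ter_bar] at h2
  exact h2

/-- The number of generated edges at any vertex of the generated subgraph equals
the number at the base vertex. -/
lemma ncard_A_const [Finite G.E] (v : G.V) (hv : ∀ e ∈ s, G.ini e = v)
    {e : G.E} (he : Gen G N s e) :
    {g | Gen G N s g ∧ G.ini g = G.ini e}.ncard =
        {g | Gen G N s g ∧ G.ini g = v}.ncard ∧
      {g | Gen G N s g ∧ G.ini g = G.ter e}.ncard =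
        {g | Gen G N s g ∧ G.ini g = v}.ncard := by
  induction he with
  | base e hes =>
      have h1 : G.ini e = v := hv e hes
      refine ⟨by rw [h1], ?_⟩
      rw [ncard_A_eq (Gen.base e hes), h1]
  | barc e he ih =>
      have h3 : G.ini (G.bar e) = G.ter e := rfl
      rw [h3, ter_bar]
      exact ⟨ih.2, ih.1⟩
  | step e f hge hgf hif ihe ihf =>
      have h1 : G.ini (N.nabla e f) = G.ter e := N.ini_nabla e f
      constructor
      · rw [h1]; exact ihe.2
      · rw [ncard_A_eq (Gen.step e f hge hgf hif), h1]; exact ihe.2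

/-- Every endpoint of a generated edge is reachable from the base vertex through
generated edges. -/
lemma reach_of_gen (v : G.V) (hv : ∀ e ∈ s, G.ini e = v) {e : G.E} (he : Gen G N s e) :
    Relation.ReflTransGen
        (fun a b => ∃ g, Gen G N s g ∧ G.ini g = a ∧ G.ter g = b) v (G.ini e) ∧
      Relation.ReflTransGen
        (fun a b => ∃ g, Gen G N s g ∧ G.ini g = a ∧ G.ter g = b) v (G.ter e) := by
  induction he with
  | base e hes =>
      have h1 : G.ini e = v := hv e hes
      refine ⟨by rw [h1], ?_⟩
      exact Relation.ReflTransGen.single ⟨e, Gen.base e hes, h1, rfl⟩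
  | barc e he ih =>
      have h3 : G.ini (G.bar e) = G.ter e := rfl
      rw [h3, ter_bar]
      exact ⟨ih.2, ih.1⟩
  | step e f hge hgf hif ihe ihf =>
      have h1 : G.ini (N.nabla e f) = G.ter e := N.ini_nabla e f
      rw [h1]
      exact ⟨ihe.2, ihe.2.tail ⟨N.nabla e f, Gen.step e f hge hgf hif, h1, rfl⟩⟩

end PreGraph

/-- Let `Γ` be an `n`-valent GKM_k graph, `k ≥ 2`. Then for any
vertex `v` of `Γ` and any `l` distinct edges `e₁, …, e_l` meeting at `v`, with
`1 ≤ l ≤ k−1`, there exists a unique `l`-dimensional face of `Γ` (a nonempty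
connected `l`-valent connection-invariant subgraph) containing `e₁, …, e_l`. -/
theorem unique_face_of_GKM_graph
    (G : PreGraph) (N : G.Connection) [Finite G.E]
    (n m k : ℕ) (hk : 2 ≤ k)
    (L : G.GKMLabel N m k) (hval : G.Valent n) (hconn : G.Connected)
    (v : G.V) (l : ℕ) (hl1 : 1 ≤ l) (hlk : l ≤ k - 1)
    (s : Finset G.E) (hcard : s.card = l) (hmem : ∀ e ∈ s, G.ini e = v) :
    ∃! S : Set G.E, G.IsFace N l S ∧ ∀ e ∈ s, e ∈ S := by
  classical
  obtain ⟨e₁, he₁⟩ : s.Nonempty := Finset.card_pos.mp (by omega)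
  set S : Set G.E := {g | Gen G N ↑s g} with hSdef
  have hmem' : ∀ e ∈ (↑s : Set G.E), G.ini e = v := fun e he => hmem e he
  have hl1k : l + 1 ≤ k := by omega
  have hcv_le : {g | Gen G N (↑s : Set G.E) g ∧ G.ini g = v}.ncard ≤ l :=
    ncard_A_le_l L s rfl hcard hl1k v
  have hcv_ge : l ≤ {g | Gen G N (↑s : Set G.E) g ∧ G.ini g = v}.ncard := by
    have hsub : (↑s : Set G.E) ⊆ {g | Gen G N (↑s : Set G.E) g ∧ G.ini g = v} :=
      fun e he => ⟨Gen.base e he, hmem' e he⟩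
    have := Set.ncard_le_ncard hsub (Set.toFinite _)
    rwa [Set.ncard_coe_finset, hcard] at this
  have hcv : {g | Gen G N (↑s : Set G.E) g ∧ G.ini g = v}.ncard = l :=
    le_antisymm hcv_le hcv_ge
  have hvalS : ∀ x ∈ G.ini '' S, {g | g ∈ S ∧ G.ini g = x}.ncard = l := by
    rintro x ⟨e, he, rfl⟩
    show {g | Gen G N (↑s : Set G.E) g ∧ G.ini g = G.ini e}.ncard = l
    rw [(ncard_A_const v hmem' he).1, hcv]
  have hvS : v ∈ G.ini '' S := ⟨e₁, Gen.base e₁ he₁, hmem e₁ he₁⟩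
  have hsymm : Symmetric (fun a b => ∃ g ∈ S, G.ini g = a ∧ G.ter g = b) := by
    rintro a b ⟨g, hg, rfl, rfl⟩
    exact ⟨G.bar g, Gen.barc g hg, rfl, ter_bar g⟩
  have hface : G.IsFace N l S := by
    refine ⟨⟨e₁, Gen.base e₁ he₁⟩, fun e he => Gen.barc e he,
      fun e he f hf h => Gen.step e f he hf h, hvalS, ?_⟩
    rintro x ⟨e, he, rfl⟩ w ⟨e', he', rfl⟩
    have h1 := (reach_of_gen v hmem' he).1
    have h2 := (reach_of_gen v hmem' he').1
    exact Relation.ReflTransGen.trans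
      ((@Relation.ReflTransGen.symmetric _ _ ⟨hsymm⟩).symm _ _ h1) h2
  refine ⟨S, ⟨hface, fun e he => Gen.base e he⟩, ?_⟩
  rintro S' ⟨⟨hne', hbar', hnab', hval', hconn'⟩, hsS'⟩
  have hSsub : S ⊆ S' := by
    intro g hg
    induction hg with
    | base e he => exact hsS' e he
    | barc e _ ih => exact hbar' e ih
    | step e f _ _ h ihe ihf => exact hnab' e ihe f ihf h
  have hvS' : v ∈ G.ini '' S' := ⟨e₁, hsS' e₁ he₁, hmem e₁ he₁⟩
  have hAeq : ∀ x ∈ G.ini '' S, {g | g ∈ S' ∧ G.ini g = x} = {g | g ∈ S ∧ G.ini g = x} := by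
    intro x hx
    have hx' : x ∈ G.ini '' S' := by
      obtain ⟨e, he, rfl⟩ := hx
      exact ⟨e, hSsub he, rfl⟩
    have hsub2 : {g | g ∈ S ∧ G.ini g = x} ⊆ {g | g ∈ S' ∧ G.ini g = x} :=
      fun g hg => ⟨hSsub hg.1, hg.2⟩
    refine (Set.eq_of_subset_of_ncard_le hsub2 ?_ (Set.toFinite _)).symm
    rw [hval' x hx', hvalS x hx]
  have hvert : ∀ w, w ∈ G.ini '' S' → w ∈ G.ini '' S := by
    intro w hw
    have hR := hconn' v hvS' w hw
    clear hw
    induction hR with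
    | refl => exact hvS
    | tail _ r ih =>
        obtain ⟨g, hgS', rfl, rfl⟩ := r
        have hg : g ∈ S := by
          have : g ∈ {g' | g' ∈ S ∧ G.ini g' = G.ini g} := by
            rw [← hAeq (G.ini g) ih]
            exact ⟨hgS', rfl⟩
          exact this.1
        exact ⟨G.bar g, Gen.barc g hg, rfl⟩
  have hS'sub : S' ⊆ S := by
    intro g hg'
    have hx : G.ini g ∈ G.ini '' S := hvert _ ⟨g, hg', rfl⟩
    have : g ∈ {g' | g' ∈ S ∧ G.ini g' = G.ini g} := by
      rw [← hAeq (G.ini g) hx]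
      exact ⟨hg', rfl⟩
    exact this.1
  exact Set.Subset.antisymm hS'sub hSsub
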